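/- Any sequence of moves that transforms the distribution μ = {(0,1)} (a single point mass of size 1 at the origin) into a distribution ν with ν{|x| ≥ d} ≥ p, where d > 0 and 0 < p < 1, must contain at least (3p)^(3/2)·d³ moves. -/

import Mathlib

/-- The total mass of `μ` on a set `A` of positions. -/
noncomputable def mass (μ : ℝ →₀ ℝ) (A : Set ℝ) : ℝ :=
  ∑ x ∈ μ.support, Set.indicator A μ x

/-- The `j`-th moment of a finitely supported mass function. -/
noncomputable def moment (j : ℕ) (μ : ℝ →₀ ℝ) : ℝ :=
  ∑ x ∈ μ.support, μ x * x ^ j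

/-- The spread `S[μ] = Σ_{i<j} m_i m_j |x_i - x_j| = (1/2)·Σ_{x,y} μ(x) μ(y) |x - y|`. -/
noncomputable def spread (μ : ℝ →₀ ℝ) : ℝ :=
  (1 / 2) * ∑ x ∈ μ.support, ∑ y ∈ μ.support, μ x * μ y * |x - y|

/-- A distribution: finitely supported, nonnegative, not identically zero. -/
def IsDistribution (μ : ℝ →₀ ℝ) : Prop :=
  (∀ x, 0 ≤ μ x) ∧ μ ≠ 0

/-- A move `([a, a+1], δ)`: a signed distribution `δ` supported in `[a, a+1]`
with vanishing total mass and first moment. -/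
structure Move where
  a : ℝ
  δ : ℝ →₀ ℝ
  supp_subset : ∀ x, δ x ≠ 0 → a ≤ x ∧ x ≤ a + 1
  m0 : moment 0 δ = 0
  m1 : moment 1 δ = 0

/-- The center of a move. -/
noncomputable def Move.center (v : Move) : ℝ := v.a + 1 / 2

/-- `μ 0, μ 1, …, μ ℓ` is a sequence of distributions obtained by applying the
moves `v 0, …, v (ℓ-1)` in order (each move applicable, i.e. each result is a
distribution). -/
def IsMoveSeq (ℓ : ℕ) (v : ℕ → Move) (μ : ℕ → ℝ →₀ ℝ) : Prop :=
  (∀ i ≤ ℓ, IsDistribution (μ i)) ∧ ∀ i < ℓ, μ (i + 1) = μ i + (v i).δ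

/-- `μ_max(A) = max_{0 ≤ i ≤ ℓ} μ_i(A)`. -/
noncomputable def muMax (ℓ : ℕ) (μ : ℕ → ℝ →₀ ℝ) (A : Set ℝ) : ℝ :=
  (Finset.range (ℓ + 1)).sup' (Finset.nonempty_range_iff.mpr (Nat.succ_ne_zero ℓ))
    (fun i => mass (μ i) A)

open scoped Classical in
/-- The number of moves among `v 0, …, v (ℓ-1)` whose center lies in `(a, ∞)`. -/
noncomputable def movesBeyond (ℓ : ℕ) (v : ℕ → Move) (a : ℝ) : ℕ :=
  ((Finset.range ℓ).filter (fun i => a < (v i).center)).card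

/-- A sequence of moves is weight-constrained (w.r.t. the generated sequence of
distributions) if for every `a` the number of moves centered in `(a, ∞)` is at
most `μ_max{x > a}`. -/
def WeightConstrained (ℓ : ℕ) (v : ℕ → Move) (μ : ℕ → ℝ →₀ ℝ) : Prop :=
  ∀ a : ℝ, (movesBeyond ℓ v a : ℝ) ≤ muMax ℓ μ {x | a < x}

/-- `μ'` is a basic split of `μ`: one point mass `(x, μ x)` of `μ` is replaced by
finitely many point masses of positive mass with total mass `μ x` and center of
mass at `x`, the remaining point masses being unchanged. -/
def BasicSplit (μ μ' : ℝ →₀ ℝ) : Prop :=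
  ∃ (x : ℝ) (ν : ℝ →₀ ℝ), 0 < μ x ∧ (∀ y, 0 ≤ ν y) ∧
    moment 0 ν = μ x ∧ moment 1 ν = μ x * x ∧ μ' = μ.erase x + ν

/-- `μ ⪯ μ'` : `μ'` is obtained from `μ` by finitely many basic splits. -/
def Splits (μ μ' : ℝ →₀ ℝ) : Prop := Relation.ReflTransGen BasicSplit μ μ'

/-- `ν` is the result of the extreme move on `[a, b]` applied to `μ`: `ν` agrees
with `μ` outside `[a, b]`, vanishes on `(a, b)`, and has the same total mass and
first moment as `μ` (so all mass in `[a, b]` is moved to the endpoints). -/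
def IsExtremeMoveOn (a b : ℝ) (μ ν : ℝ →₀ ℝ) : Prop :=
  (∀ x, x ∉ Set.Icc a b → ν x = μ x) ∧
  (∀ x, x ∈ Set.Ioo a b → ν x = 0) ∧
  moment 0 ν = moment 0 μ ∧ moment 1 ν = moment 1 μ


open Finset
open scoped Classical

namespace MfPM


noncomputable def msum (μ : ℝ →₀ ℝ) (f : ℝ → ℝ) : ℝ := ∑ x ∈ μ.support, μ x * f x

lemma msum_eq_superset (μ : ℝ →₀ ℝ) {s : Finset ℝ} (h : μ.support ⊆ s) (f : ℝ → ℝ) :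
    msum μ f = ∑ x ∈ s, μ x * f x :=
  Finset.sum_subset h (fun x _ hx => by
    rw [Finsupp.notMem_support_iff.mp hx, zero_mul])

lemma moment_eq_msum (j : ℕ) (μ : ℝ →₀ ℝ) : moment j μ = msum μ (fun x => x ^ j) := rfl

lemma msum_add (μ ν : ℝ →₀ ℝ) (f : ℝ → ℝ) : msum (μ + ν) f = msum μ f + msum ν f := by
  classical
  have h1 : (μ + ν).support ⊆ μ.support ∪ ν.support := Finsupp.support_add
  rw [msum_eq_superset (μ + ν) h1 f, msum_eq_superset μ (subset_union_left) f,
    msum_eq_superset ν (subset_union_right) f, ← Finset.sum_add_distrib]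
  refine Finset.sum_congr rfl (fun x _ => ?_)
  rw [Finsupp.add_apply]; ring

lemma midpoint_cube {p q : ℝ} (h : p ≤ q) :
    (q - p) * (1 - (p + q))^2 ≤ ((1 - 2*p)^3 - (1 - 2*q)^3)/6 := by
  nlinarith [mul_nonneg (mul_nonneg (sub_nonneg.2 h) (sub_nonneg.2 h)) (sub_nonneg.2 h)]

lemma weighted_cs (s : Finset ℕ) (w a b : ℕ → ℝ) (hw : ∀ k ∈ s, 0 ≤ w k) :
    (∑ k ∈ s, w k * (a k * b k))^2 ≤ (∑ k ∈ s, w k * (a k)^2) * (∑ k ∈ s, w k * (b k)^2) := by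
  have h := Finset.sum_mul_sq_le_sq_mul_sq s (fun k => Real.sqrt (w k) * a k)
      (fun k => Real.sqrt (w k) * b k)
  have e1 : ∑ k ∈ s, (Real.sqrt (w k) * a k) * (Real.sqrt (w k) * b k)
      = ∑ k ∈ s, w k * (a k * b k) := by
    refine Finset.sum_congr rfl (fun k hk => ?_)
    have hs : Real.sqrt (w k) * Real.sqrt (w k) = w k := Real.mul_self_sqrt (hw k hk)
    calc (Real.sqrt (w k) * a k) * (Real.sqrt (w k) * b k)
        = (Real.sqrt (w k) * Real.sqrt (w k)) * (a k * b k) := by ring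
      _ = w k * (a k * b k) := by rw [hs]
  have e2 : ∑ k ∈ s, (Real.sqrt (w k) * a k)^2 = ∑ k ∈ s, w k * (a k)^2 := by
    refine Finset.sum_congr rfl (fun k hk => ?_)
    have hs : Real.sqrt (w k) * Real.sqrt (w k) = w k := Real.mul_self_sqrt (hw k hk)
    calc (Real.sqrt (w k) * a k)^2 = (Real.sqrt (w k) * Real.sqrt (w k)) * (a k)^2 := by ring
      _ = w k * (a k)^2 := by rw [hs]
  have e3 : ∑ k ∈ s, (Real.sqrt (w k) * b k)^2 = ∑ k ∈ s, w k * (b k)^2 := by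
    refine Finset.sum_congr rfl (fun k hk => ?_)
    have hs : Real.sqrt (w k) * Real.sqrt (w k) = w k := Real.mul_self_sqrt (hw k hk)
    calc (Real.sqrt (w k) * b k)^2 = (Real.sqrt (w k) * Real.sqrt (w k)) * (b k)^2 := by ring
      _ = w k * (b k)^2 := by rw [hs]
  rw [e1, e2, e3] at h
  exact h



lemma list_map_sum_eq (F : ℝ → ℝ) : ∀ l : List ℝ,
    (l.map F).sum = ∑ i ∈ range l.length, F (l.getD i 0) := by
  intro l
  induction l with
  | nil => simp
  | cons a l ih =>
      rw [List.map_cons, List.sum_cons, ih, List.length_cons, Finset.sum_range_succ']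
      simp [List.getD_cons_succ, List.getD_cons_zero, add_comm]

lemma finset_enum (s : Finset ℝ) : ∃ (n : ℕ) (Y : ℕ → ℝ),
    (∀ i j, i ≤ j → j < n → Y i ≤ Y j) ∧ (∀ i, i < n → Y i ∈ s) ∧
    (∀ F : ℝ → ℝ, ∑ x ∈ s, F x = ∑ i ∈ range n, F (Y i)) := by
  classical
  set l := s.sort (· ≤ ·) with hl
  refine ⟨l.length, fun i => l.getD i 0, ?_, ?_, ?_⟩
  · intro i j hij hj
    rcases eq_or_lt_of_le hij with h | h
    · subst h; exact le_refl _
    · have hs : l.Pairwise (· ≤ ·) := Finset.pairwise_sort _ _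
      have hi : i < l.length := lt_trans h hj
      show l.getD i 0 ≤ l.getD j 0
      rw [List.getD_eq_getElem _ _ hi, List.getD_eq_getElem _ _ hj]
      have := List.Pairwise.rel_get_of_lt hs (a := ⟨i, hi⟩) (b := ⟨j, hj⟩) (by exact_mod_cast h)
      simpa using this
  · intro i hi
    show l.getD i 0 ∈ s
    rw [List.getD_eq_getElem _ _ hi]
    have : l[i] ∈ l := List.getElem_mem hi
    rwa [Finset.mem_sort (· ≤ ·)] at this
  · intro F
    rw [← list_map_sum_eq]
    have hperm : List.Perm l s.toList := Finset.sort_perm_toList _ _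
    have h2 : (l.map F).sum = (s.toList.map F).sum := (hperm.map F).sum_eq
    rw [h2, ← Finset.sum_map_toList]



lemma sum_ite_le_eq (g : ℕ → ℝ) {i n : ℕ} (h : i < n) :
    ∑ k ∈ range n, (if k ≤ i then g k else 0) = ∑ k ∈ range (i+1), g k := by
  have h1 : ∑ k ∈ range (i+1), (if k ≤ i then g k else 0)
      = ∑ k ∈ range n, (if k ≤ i then g k else 0) :=
    Finset.sum_subset (Finset.range_subset_range.2 h)
      (fun k _ hk => if_neg (by simp only [mem_range] at hk; omega))
  rw [← h1]
  exact Finset.sum_congr rfl (fun k hk => if_pos (by simp only [mem_range] at hk; omega))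

lemma swap_lemma (n m : ℕ) (A c : ℕ → ℝ) :
    ∑ i ∈ range n, A i * (∑ k ∈ range m, if k ≤ i then c k else 0)
    = ∑ k ∈ range m, c k * (∑ i ∈ range n, if k ≤ i then A i else 0) := by
  calc ∑ i ∈ range n, A i * (∑ k ∈ range m, if k ≤ i then c k else 0)
      = ∑ i ∈ range n, ∑ k ∈ range m, (if k ≤ i then A i * c k else 0) := by
        refine Finset.sum_congr rfl fun i _ => ?_
        rw [Finset.mul_sum]
        refine Finset.sum_congr rfl fun k _ => ?_
        split_ifs <;> simp
    _ = ∑ k ∈ range m, ∑ i ∈ range n, (if k ≤ i then A i * c k else 0) := Finset.sum_comm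
    _ = ∑ k ∈ range m, c k * (∑ i ∈ range n, if k ≤ i then A i else 0) := by
        refine Finset.sum_congr rfl fun k _ => ?_
        rw [Finset.mul_sum]
        refine Finset.sum_congr rfl fun i _ => ?_
        split_ifs <;> ring

lemma core_E_nat (n : ℕ) (Y α : ℕ → ℝ)
    (hmono : ∀ i j, i ≤ j → j < n → Y i ≤ Y j)
    (h0 : ∀ i, i < n → 0 ≤ Y i) (h1 : ∀ i, i < n → Y i ≤ 1)
    (hα : ∀ i, i < n → 0 ≤ α i) :
    3 * (∑ i ∈ range n, α i * (Y i * (1 - Y i)))^2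
      ≤ (∑ i ∈ range n, α i * (1 - Y i)) * (∑ i ∈ range n, α i * Y i)
        - 1/2 * ∑ i ∈ range n, ∑ j ∈ range n, α i * (α j * |Y i - Y j|) := by
  classical
  set Z : ℕ → ℝ := fun k => if k = 0 then 0 else if k ≤ n then Y (k-1) else 1 with hZdef
  set g : ℕ → ℝ := fun k => Z (k+1) - Z k with hgdef
  set T : ℕ → ℝ := fun k => ∑ i ∈ range n, (if k ≤ i then α i else 0) with hTdef
  set v : ℕ → ℝ := fun k => 1 - Z k - Z (k+1) with hvdef
  have hZ0 : Z 0 = 0 := by simp [hZdef]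
  have hZlast : Z (n+1) = 1 := by
    simp only [hZdef]
    rw [if_neg (Nat.succ_ne_zero n), if_neg (by omega)]
  have hZY : ∀ i, i < n → Z (i+1) = Y i := by
    intro i hi
    simp only [hZdef]
    rw [if_neg (Nat.succ_ne_zero i), if_pos (by omega)]
    simp
  have hZmono : ∀ k, k ≤ n → Z k ≤ Z (k+1) := by
    intro k hk
    rcases Nat.eq_zero_or_pos k with hk0 | hkpos
    · subst hk0
      rw [hZ0]
      rcases Nat.eq_zero_or_pos n with hn0 | hnpos
      · subst hn0; rw [hZlast]; norm_num
      · rw [hZY 0 hnpos]; exact h0 0 hnpos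
    · have hzk : Z k = Y (k-1) := by
        simp only [hZdef]; rw [if_neg (by omega), if_pos (by omega)]
      rcases Nat.lt_or_ge k n with hkn | hkn
      · rw [hzk, hZY k hkn]
        exact hmono (k-1) k (by omega) hkn
      · have hkeq : k = n := by omega
        subst hkeq
        rw [hzk, hZlast]
        exact h1 (k-1) (by omega)
  have hg : ∀ k ∈ range (n+1), (0:ℝ) ≤ g k := by
    intro k hk
    simp only [mem_range] at hk
    exact sub_nonneg.2 (hZmono k (by omega))
  have hgsum : ∑ k ∈ range (n+1), g k = 1 := by
    simp only [hgdef]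
    rw [Finset.sum_range_sub Z (n+1), hZlast, hZ0, sub_zero]
  have hYrep : ∀ i, i < n → Y i = ∑ k ∈ range (n+1), (if k ≤ i then g k else 0) := by
    intro i hi
    rw [sum_ite_le_eq g (by omega : i < n+1)]
    simp only [hgdef]
    rw [Finset.sum_range_sub Z (i+1), hZ0, sub_zero, hZY i hi]
  have hY2rep : ∀ i, i < n → Y i^2
      = ∑ k ∈ range (n+1), (if k ≤ i then (Z (k+1)^2 - Z k ^2) else 0) := by
    intro i hi
    rw [sum_ite_le_eq _ (by omega : i < n+1),
      Finset.sum_range_sub (fun k => Z k ^ 2) (i+1), hZ0, hZY i hi]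
    norm_num
  set B : ℝ := ∑ i ∈ range n, α i * Y i with hBdef
  set m : ℝ := ∑ i ∈ range n, α i with hmdef
  set W : ℝ := ∑ k ∈ range (n+1), g k * T k ^ 2 with hWdef
  -- B in gap form
  have hB : B = ∑ k ∈ range (n+1), g k * T k := by
    rw [hBdef]
    rw [Finset.sum_congr rfl (fun i hi => by
      rw [hYrep i (mem_range.1 hi)])]
    exact swap_lemma n (n+1) α g
  -- second moment sum in gap form
  have hY2sum : ∑ i ∈ range n, α i * Y i ^ 2
      = ∑ k ∈ range (n+1), (Z (k+1)^2 - Z k^2) * T k := by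
    rw [Finset.sum_congr rfl (fun i hi => by
      rw [hY2rep i (mem_range.1 hi)])]
    exact swap_lemma n (n+1) α (fun k => Z (k+1)^2 - Z k^2)
  -- absolute difference representation
  have habs_aux : ∀ i j, i ≤ j → j < n →
      |Y i - Y j| = Y i + Y j - 2 * ∑ k ∈ range (n+1), (if k ≤ i ∧ k ≤ j then g k else 0) := by
    intro i j hij hj
    have he : ∀ k, (if k ≤ i ∧ k ≤ j then g k else 0) = (if k ≤ i then g k else 0) := by
      intro k
      by_cases hk : k ≤ i
      · rw [if_pos ⟨hk, le_trans hk hij⟩, if_pos hk]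
      · rw [if_neg (fun hc => hk hc.1), if_neg hk]
    rw [Finset.sum_congr rfl (fun k _ => he k), ← hYrep i (lt_of_le_of_lt hij hj)]
    rw [abs_of_nonpos (sub_nonpos.2 (hmono i j hij hj))]
    ring
  have habs : ∀ i j, i < n → j < n →
      |Y i - Y j| = Y i + Y j - 2 * ∑ k ∈ range (n+1), (if k ≤ i ∧ k ≤ j then g k else 0) := by
    intro i j hi hj
    rcases le_total i j with h | h
    · exact habs_aux i j h hj
    · have h2 := habs_aux j i h hi
      rw [abs_sub_comm] at h2
      rw [h2]
      have h3 : ∑ k ∈ range (n+1), (if k ≤ j ∧ k ≤ i then g k else 0)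
          = ∑ k ∈ range (n+1), (if k ≤ i ∧ k ≤ j then g k else 0) := by
        refine Finset.sum_congr rfl fun k _ => ?_
        by_cases h4 : k ≤ i <;> by_cases h5 : k ≤ j <;> simp [h4, h5]
      rw [h3]
      ring
  -- the double sum identity
  have hD : ∑ i ∈ range n, ∑ j ∈ range n, α i * (α j * |Y i - Y j|)
      = 2 * m * B - 2 * W := by
    have step1 : ∑ i ∈ range n, ∑ j ∈ range n, α i * (α j * |Y i - Y j|)
        = ∑ i ∈ range n, ∑ j ∈ range n,
            (α i * (α j * (Y i + Y j))
              - 2 * ∑ k ∈ range (n+1), ((if k ≤ i then α i else 0) * ((if k ≤ j then α j else 0) * g k))) := by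
      refine Finset.sum_congr rfl fun i hi => Finset.sum_congr rfl fun j hj => ?_
      rw [habs i j (mem_range.1 hi) (mem_range.1 hj)]
      have hsum_eq : ∑ k ∈ range (n+1), ((if k ≤ i then α i else 0) * ((if k ≤ j then α j else 0) * g k))
          = α i * (α j * ∑ k ∈ range (n+1), (if k ≤ i ∧ k ≤ j then g k else 0)) := by
        have e : ∀ k, (if k ≤ i then α i else 0) * ((if k ≤ j then α j else 0) * g k)
            = α i * (α j * (if k ≤ i ∧ k ≤ j then g k else 0)) := by
          intro k
          by_cases hki : k ≤ i <;> by_cases hkj : k ≤ j <;> simp [hki, hkj]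
        rw [Finset.sum_congr rfl (fun k _ => e k), ← Finset.mul_sum, ← Finset.mul_sum]
      rw [hsum_eq]; ring
    rw [step1]
    have split : ∑ i ∈ range n, ∑ j ∈ range n,
        (α i * (α j * (Y i + Y j))
          - 2 * ∑ k ∈ range (n+1), ((if k ≤ i then α i else 0) * ((if k ≤ j then α j else 0) * g k)))
        = (∑ i ∈ range n, ∑ j ∈ range n, α i * (α j * (Y i + Y j)))
          - 2 * ∑ i ∈ range n, ∑ j ∈ range n, ∑ k ∈ range (n+1),
              ((if k ≤ i then α i else 0) * ((if k ≤ j then α j else 0) * g k)) := by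
      rw [Finset.mul_sum, ← Finset.sum_sub_distrib]
      refine Finset.sum_congr rfl fun i _ => ?_
      rw [Finset.mul_sum, ← Finset.sum_sub_distrib]
    rw [split]
    have part1 : ∑ i ∈ range n, ∑ j ∈ range n, α i * (α j * (Y i + Y j)) = 2 * m * B := by
      have e : ∀ i ∈ range n, ∑ j ∈ range n, α i * (α j * (Y i + Y j))
          = α i * Y i * m + α i * B := by
        intro i _
        have e2 : ∀ j, α i * (α j * (Y i + Y j)) = α i * Y i * α j + α i * (α j * Y j) :=
          fun j => by ring
        rw [Finset.sum_congr rfl (fun j _ => e2 j), Finset.sum_add_distrib,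
          ← Finset.mul_sum, ← Finset.mul_sum, hmdef, hBdef]
      rw [Finset.sum_congr rfl e, Finset.sum_add_distrib, ← Finset.sum_mul, ← Finset.sum_mul,
        ← hBdef, ← hmdef]
      ring
    have part2 : ∑ i ∈ range n, ∑ j ∈ range n, ∑ k ∈ range (n+1),
        ((if k ≤ i then α i else 0) * ((if k ≤ j then α j else 0) * g k)) = W := by
      have swap1 : ∀ i ∈ range n, ∑ j ∈ range n, ∑ k ∈ range (n+1),
          ((if k ≤ i then α i else 0) * ((if k ≤ j then α j else 0) * g k))
          = ∑ k ∈ range (n+1), (if k ≤ i then α i else 0) * (T k * g k) := by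
        intro i _
        rw [Finset.sum_comm]
        refine Finset.sum_congr rfl fun k _ => ?_
        calc ∑ j ∈ range n, (if k ≤ i then α i else 0) * ((if k ≤ j then α j else 0) * g k)
            = (if k ≤ i then α i else 0) * ((∑ j ∈ range n, (if k ≤ j then α j else 0)) * g k) := by
              rw [Finset.sum_mul, Finset.mul_sum]
          _ = (if k ≤ i then α i else 0) * (T k * g k) := rfl
      rw [Finset.sum_congr rfl swap1, Finset.sum_comm, hWdef]
      refine Finset.sum_congr rfl fun k _ => ?_
      have hTk : (∑ i ∈ range n, (if k ≤ i then α i else 0)) = T k := rfl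
      rw [← Finset.sum_mul, hTk]
      ring
    rw [part1, part2]
  -- Delta in gap form
  set Δ : ℝ := ∑ i ∈ range n, α i * (Y i * (1 - Y i)) with hΔdef
  have hΔ : Δ = ∑ k ∈ range (n+1), g k * (T k * v k) := by
    have e : Δ = B - ∑ i ∈ range n, α i * Y i ^ 2 := by
      rw [hΔdef, hBdef, ← Finset.sum_sub_distrib]
      refine Finset.sum_congr rfl fun i _ => by ring
    rw [e, hB, hY2sum, ← Finset.sum_sub_distrib]
    refine Finset.sum_congr rfl fun k _ => ?_
    simp only [hgdef, hvdef]
    ring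
  -- sum g v = 0
  have hgv : ∑ k ∈ range (n+1), g k * v k = 0 := by
    have e : ∀ k, g k * v k = g k - (Z (k+1)^2 - Z k^2) := by
      intro k; simp only [hgdef, hvdef]; ring
    rw [Finset.sum_congr rfl (fun k _ => e k), Finset.sum_sub_distrib, hgsum,
      Finset.sum_range_sub (fun k => Z k ^ 2), hZlast, hZ0]
    norm_num
  -- sum g v^2 ≤ 1/3
  have hgv2 : ∑ k ∈ range (n+1), g k * v k ^ 2 ≤ 1/3 := by
    have e : ∀ k ∈ range (n+1), g k * v k ^ 2
        ≤ ((1 - 2 * Z k)^3 - (1 - 2 * Z (k+1))^3)/6 := by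
      intro k hk
      simp only [mem_range] at hk
      have := midpoint_cube (hZmono k (by omega))
      simp only [hgdef, hvdef]
      calc (Z (k+1) - Z k) * (1 - Z k - Z (k+1))^2
          = (Z (k+1) - Z k) * (1 - (Z k + Z (k+1)))^2 := by ring
        _ ≤ _ := this
    calc ∑ k ∈ range (n+1), g k * v k ^ 2
        ≤ ∑ k ∈ range (n+1), ((1 - 2 * Z k)^3 - (1 - 2 * Z (k+1))^3)/6 :=
          Finset.sum_le_sum e
      _ = (∑ k ∈ range (n+1), ((fun k => (1 - 2 * Z k)^3) k - (fun k => (1 - 2 * Z k)^3) (k+1)))/6 := by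
          rw [← Finset.sum_div]
      _ = ((1 - 2 * Z 0)^3 - (1 - 2 * Z (n+1))^3)/6 := by
          rw [Finset.sum_range_sub' (fun k => (1 - 2 * Z k)^3) (n+1)]
      _ = 1/3 := by rw [hZ0, hZlast]; norm_num
  -- Cauchy-Schwarz
  have hΔ2 : Δ = ∑ k ∈ range (n+1), g k * ((T k - B) * v k) := by
    rw [hΔ]
    have e : ∀ k, g k * ((T k - B) * v k) = g k * (T k * v k) - B * (g k * v k) := by
      intro k; ring
    rw [Finset.sum_congr rfl (fun k _ => e k), Finset.sum_sub_distrib, ← Finset.mul_sum, hgv]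
    ring
  have hCS : Δ^2 ≤ (∑ k ∈ range (n+1), g k * (T k - B)^2) * (∑ k ∈ range (n+1), g k * v k ^ 2) := by
    rw [hΔ2]
    exact weighted_cs (range (n+1)) g (fun k => T k - B) v hg
  have hvar : ∑ k ∈ range (n+1), g k * (T k - B)^2 = W - B^2 := by
    have e : ∀ k, g k * (T k - B)^2 = g k * T k ^2 - 2 * B * (g k * T k) + B^2 * g k := by
      intro k; ring
    rw [Finset.sum_congr rfl (fun k _ => e k), Finset.sum_add_distrib, Finset.sum_sub_distrib,
      ← Finset.mul_sum, ← Finset.mul_sum, ← hB, ← hWdef, hgsum]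
    ring
  have hvarnn : 0 ≤ W - B^2 := by
    rw [← hvar]
    exact Finset.sum_nonneg (fun k hk => mul_nonneg (hg k hk) (sq_nonneg _))
  have hgv2nn : 0 ≤ ∑ k ∈ range (n+1), g k * v k ^ 2 :=
    Finset.sum_nonneg (fun k hk => mul_nonneg (hg k hk) (sq_nonneg _))
  -- assemble
  have hfinal : 3 * Δ^2 ≤ W - B^2 := by
    rw [hvar] at hCS
    nlinarith [hCS, hgv2, hvarnn, hgv2nn, mul_nonneg hvarnn (sub_nonneg.2 hgv2)]
  -- rewrite goal
  have hgoal1 : ∑ i ∈ range n, α i * (1 - Y i) = m - B := by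
    rw [hmdef, hBdef, ← Finset.sum_sub_distrib]
    exact Finset.sum_congr rfl fun i _ => by ring
  rw [hgoal1, hD]
  calc 3 * Δ^2 ≤ W - B^2 := hfinal
    _ = (m - B) * B - 1/2 * (2 * m * B - 2 * W) := by ring


lemma sum_ite_lt_eq (g : ℕ → ℝ) {j n : ℕ} (h : j ≤ n) :
    ∑ k ∈ range n, (if k < j then g k else 0) = ∑ k ∈ range j, g k := by
  have h1 : ∑ k ∈ range j, (if k < j then g k else 0)
      = ∑ k ∈ range n, (if k < j then g k else 0) :=
    Finset.sum_subset (Finset.range_subset_range.2 h)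
      (fun k _ hk => if_neg (by simp only [mem_range] at hk; omega))
  rw [← h1]
  exact Finset.sum_congr rfl fun k hk => if_pos (mem_range.1 hk)

lemma core_F_nat (n : ℕ) (Y α : ℕ → ℝ)
    (hmono : ∀ i j, i ≤ j → j < n → Y i ≤ Y j)
    (hα : ∀ i, i < n → 0 ≤ α i)
    (hsum : ∑ i ∈ range n, α i = 1) :
    (1/2 * ∑ i ∈ range n, ∑ j ∈ range n, α i * (α j * |Y i - Y j|))^2
      ≤ (∑ i ∈ range n, α i * Y i ^ 2) / 3 := by
  classical
  set C : ℕ → ℝ := fun k => ∑ i ∈ range k, α i with hCdef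
  set G : ℕ → ℝ := fun k => C (k+1) + C k - 1 with hGdef
  have hC0 : C 0 = 0 := by simp [hCdef]
  have hCn : C n = 1 := hsum
  have hCstep : ∀ k, C (k+1) - C k = α k := by
    intro k
    simp only [hCdef]
    rw [Finset.sum_range_succ]
    ring
  have hCmono : ∀ k, k < n → C k ≤ C (k+1) := by
    intro k hk
    have := hCstep k
    have := hα k hk
    linarith
  -- split of |Y i - Y j|
  have habs : ∀ i j, i < n → j < n →
      |Y i - Y j| = (if j ≤ i then Y i - Y j else 0) + (if i ≤ j then Y j - Y i else 0) := by
    intro i j hi hj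
    rcases le_total i j with h | h
    · rcases eq_or_lt_of_le h with he | hlt
      · subst he; simp
      · rw [if_neg (by omega), if_pos h, abs_of_nonpos (sub_nonpos.2 (hmono i j h hj))]
        ring
    · rcases eq_or_lt_of_le h with he | hlt
      · subst he; simp
      · rw [if_pos h, if_neg (by omega), abs_of_nonneg (sub_nonneg.2 (hmono j i h hi))]
        ring
  -- double sum identity
  have hD : ∑ i ∈ range n, ∑ j ∈ range n, α i * (α j * |Y i - Y j|)
      = 2 * ∑ k ∈ range n, α k * (Y k * G k) := by
    have step1 : ∑ i ∈ range n, ∑ j ∈ range n, α i * (α j * |Y i - Y j|)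
        = (∑ i ∈ range n, ∑ j ∈ range n, (if j ≤ i then α i * (α j * (Y i - Y j)) else 0))
          + ∑ i ∈ range n, ∑ j ∈ range n, (if i ≤ j then α i * (α j * (Y j - Y i)) else 0) := by
      rw [← Finset.sum_add_distrib]
      refine Finset.sum_congr rfl fun i hi => ?_
      rw [← Finset.sum_add_distrib]
      refine Finset.sum_congr rfl fun j hj => ?_
      rw [habs i j (mem_range.1 hi) (mem_range.1 hj)]
      split_ifs <;> ring
    have swap2 : ∑ i ∈ range n, ∑ j ∈ range n, (if i ≤ j then α i * (α j * (Y j - Y i)) else 0)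
        = ∑ i ∈ range n, ∑ j ∈ range n, (if j ≤ i then α i * (α j * (Y i - Y j)) else 0) := by
      rw [Finset.sum_comm]
      refine Finset.sum_congr rfl fun i _ => Finset.sum_congr rfl fun j _ => ?_
      split_ifs <;> ring
    have E1 : ∑ i ∈ range n, ∑ j ∈ range n, (if j ≤ i then α i * (α j * (Y i - Y j)) else 0)
        = ∑ k ∈ range n, α k * (Y k * G k) := by
      have sp : ∀ i ∈ range n, ∑ j ∈ range n, (if j ≤ i then α i * (α j * (Y i - Y j)) else 0)
          = α i * Y i * C (i+1) - ∑ j ∈ range n, (if j ≤ i then α i * (α j * Y j) else 0) := by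
        intro i hi
        have e : ∀ j, (if j ≤ i then α i * (α j * (Y i - Y j)) else 0)
            = (if j ≤ i then α i * Y i * α j else 0) - (if j ≤ i then α i * (α j * Y j) else 0) := by
          intro j; split_ifs <;> ring
        rw [Finset.sum_congr rfl (fun j _ => e j), Finset.sum_sub_distrib]
        congr 1
        have e2 : ∀ j, (if j ≤ i then α i * Y i * α j else 0) = α i * Y i * (if j ≤ i then α j else 0) := by
          intro j; split_ifs <;> ring
        rw [Finset.sum_congr rfl (fun j _ => e2 j), ← Finset.mul_sum,
          sum_ite_le_eq α (mem_range.1 hi)]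
      rw [Finset.sum_congr rfl sp, Finset.sum_sub_distrib]
      have sw : ∑ i ∈ range n, ∑ j ∈ range n, (if j ≤ i then α i * (α j * Y j) else 0)
          = ∑ j ∈ range n, α j * Y j * (1 - C j) := by
        rw [Finset.sum_comm]
        refine Finset.sum_congr rfl fun j hj => ?_
        have e3 : ∀ i, (if j ≤ i then α i * (α j * Y j) else 0)
            = α j * Y j * (if j ≤ i then α i else 0) := by
          intro i; split_ifs <;> ring
        rw [Finset.sum_congr rfl (fun i _ => e3 i), ← Finset.mul_sum]
        have hT : ∑ i ∈ range n, (if j ≤ i then α i else 0) = 1 - C j := by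
          have e4 : ∀ i, α i = (if j ≤ i then α i else 0) + (if i < j then α i else 0) := by
            intro i
            by_cases hij : j ≤ i
            · rw [if_pos hij, if_neg (by omega)]; ring
            · rw [if_neg hij, if_pos (by omega)]; ring
          have e5 : (1:ℝ) = ∑ i ∈ range n, (if j ≤ i then α i else 0)
              + ∑ i ∈ range n, (if i < j then α i else 0) := by
            rw [← Finset.sum_add_distrib, ← hsum]
            exact Finset.sum_congr rfl fun i _ => e4 i
          have e6 : ∑ i ∈ range n, (if i < j then α i else 0) = C j := by
            rw [sum_ite_lt_eq α (le_of_lt (mem_range.1 hj))]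
          linarith [e5, e6]
        rw [hT]
      rw [sw, ← Finset.sum_sub_distrib]
      refine Finset.sum_congr rfl fun k _ => ?_
      simp only [hGdef]
      ring
    rw [step1, swap2, E1]
    ring
  rw [hD]
  have hS : (1/2 * (2 * ∑ k ∈ range n, α k * (Y k * G k)))^2
      = (∑ k ∈ range n, α k * (Y k * G k))^2 := by ring
  rw [hS]
  have hCS := weighted_cs (range n) α Y G (fun k hk => hα k (mem_range.1 hk))
  have hG2 : ∑ k ∈ range n, α k * (G k)^2 ≤ 1/3 := by
    have e : ∀ k ∈ range n, α k * (G k)^2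
        ≤ ((1 - 2 * C k)^3 - (1 - 2 * C (k+1))^3)/6 := by
      intro k hk
      have h1 := midpoint_cube (hCmono k (mem_range.1 hk))
      have h2 : α k * (G k)^2 = (C (k+1) - C k) * (1 - (C k + C (k+1)))^2 := by
        rw [← hCstep k]
        simp only [hGdef]
        ring
      rw [h2]
      exact h1
    calc ∑ k ∈ range n, α k * (G k)^2
        ≤ ∑ k ∈ range n, ((1 - 2 * C k)^3 - (1 - 2 * C (k+1))^3)/6 := Finset.sum_le_sum e
      _ = (∑ k ∈ range n, ((fun k => (1 - 2 * C k)^3) k - (fun k => (1 - 2 * C k)^3) (k+1)))/6 := by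
          rw [← Finset.sum_div]
      _ = ((1 - 2 * C 0)^3 - (1 - 2 * C n)^3)/6 := by
          rw [Finset.sum_range_sub' (fun k => (1 - 2 * C k)^3) n]
      _ = 1/3 := by rw [hC0, hCn]; norm_num
  have hY2nn : 0 ≤ ∑ i ∈ range n, α i * Y i ^ 2 :=
    Finset.sum_nonneg (fun i hi => mul_nonneg (hα i (mem_range.1 hi)) (sq_nonneg _))
  nlinarith [hCS, hG2, hY2nn, mul_nonneg hY2nn (sub_nonneg.2 hG2)]




/-! ### the extreme move -/

noncomputable def inn (σ : ℝ →₀ ℝ) (a : ℝ) : Finset ℝ :=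
  σ.support.filter (fun x => a ≤ x ∧ x ≤ a+1)

noncomputable def za (σ : ℝ →₀ ℝ) (a : ℝ) : ℝ := ∑ x ∈ inn σ a, σ x * (a+1-x)
noncomputable def zb (σ : ℝ →₀ ℝ) (a : ℝ) : ℝ := ∑ x ∈ inn σ a, σ x * (x-a)

noncomputable def extreme (σ : ℝ →₀ ℝ) (a : ℝ) : ℝ →₀ ℝ :=
  σ.filter (fun x => ¬(a ≤ x ∧ x ≤ a+1)) + Finsupp.single a (za σ a)
    + Finsupp.single (a+1) (zb σ a)

lemma extreme_apply (σ : ℝ →₀ ℝ) (a x : ℝ) :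
    extreme σ a x = (if a ≤ x ∧ x ≤ a+1 then 0 else σ x)
      + ((if a = x then za σ a else 0) + (if a+1 = x then zb σ a else 0)) := by
  rw [extreme, Finsupp.add_apply, Finsupp.add_apply, Finsupp.filter_apply,
    Finsupp.single_apply, Finsupp.single_apply]
  by_cases h : a ≤ x ∧ x ≤ a+1
  · rw [if_neg (not_not_intro h), if_pos h]; ring
  · rw [if_pos h, if_neg h]; ring

lemma za_nonneg (σ : ℝ →₀ ℝ) (a : ℝ) (hσ : ∀ x, 0 ≤ σ x) : 0 ≤ za σ a :=
  Finset.sum_nonneg fun x hx => by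
    obtain ⟨-, h1, h2⟩ := Finset.mem_filter.mp hx
    exact mul_nonneg (hσ x) (by linarith)

lemma zb_nonneg (σ : ℝ →₀ ℝ) (a : ℝ) (hσ : ∀ x, 0 ≤ σ x) : 0 ≤ zb σ a :=
  Finset.sum_nonneg fun x hx => by
    obtain ⟨-, h1, h2⟩ := Finset.mem_filter.mp hx
    exact mul_nonneg (hσ x) (by linarith)

lemma extreme_nonneg (σ : ℝ →₀ ℝ) (a : ℝ) (hσ : ∀ x, 0 ≤ σ x) :
    ∀ x, 0 ≤ extreme σ a x := by
  intro x
  rw [extreme_apply]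
  have h1 : (0:ℝ) ≤ if a ≤ x ∧ x ≤ a+1 then 0 else σ x := by
    split_ifs
    · exact le_refl 0
    · exact hσ x
  have h2 : (0:ℝ) ≤ if a = x then za σ a else 0 := by
    split_ifs
    · exact za_nonneg σ a hσ
    · exact le_refl 0
  have h3 : (0:ℝ) ≤ if a+1 = x then zb σ a else 0 := by
    split_ifs
    · exact zb_nonneg σ a hσ
    · exact le_refl 0
  linarith

lemma extreme_support (σ : ℝ →₀ ℝ) (a : ℝ) :
    (extreme σ a).support ⊆ σ.support ∪ {a, a+1} := by
  intro x hx
  rw [Finsupp.mem_support_iff] at hx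
  by_contra hmem
  apply hx
  simp only [Finset.mem_union, Finset.mem_insert, Finset.mem_singleton,
    Finsupp.mem_support_iff, not_or, not_not] at hmem
  obtain ⟨hσ0, hxa, hxb⟩ := hmem
  rw [extreme_apply, if_neg (show ¬(a = x) from fun h => hxa h.symm),
    if_neg (show ¬(a+1 = x) from fun h => hxb h.symm)]
  split_ifs <;> simp [hσ0]

lemma msum_extreme (σ : ℝ →₀ ℝ) (a : ℝ) (F : ℝ → ℝ) :
    msum (extreme σ a) F
      = (msum σ F - ∑ x ∈ inn σ a, σ x * F x) + (za σ a * F a + zb σ a * F (a+1)) := by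
  have hUa : a ∈ σ.support ∪ {a, a+1} := Finset.mem_union_right _ (by simp)
  have hUb : a+1 ∈ σ.support ∪ {a, a+1} := Finset.mem_union_right _ (by simp)
  have hσsub : σ.support ⊆ σ.support ∪ {a, a+1} := Finset.subset_union_left
  rw [msum_eq_superset _ (extreme_support σ a) F]
  have expand : ∀ x ∈ σ.support ∪ {a, a+1}, extreme σ a x * F x
      = ((if a ≤ x ∧ x ≤ a+1 then 0 else σ x * F x)
        + ((if a = x then za σ a * F x else 0) + (if a+1 = x then zb σ a * F x else 0))) := by
    intro x _
    rw [extreme_apply]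
    split_ifs <;> ring
  rw [Finset.sum_congr rfl expand, Finset.sum_add_distrib, Finset.sum_add_distrib]
  have h2 : ∑ x ∈ σ.support ∪ {a, a+1}, (if a = x then za σ a * F x else 0)
      = za σ a * F a := by
    rw [Finset.sum_ite_eq]; exact if_pos hUa
  have h3 : ∑ x ∈ σ.support ∪ {a, a+1}, (if a+1 = x then zb σ a * F x else 0)
      = zb σ a * F (a+1) := by
    rw [Finset.sum_ite_eq]; exact if_pos hUb
  have h1 : ∑ x ∈ σ.support ∪ {a, a+1}, (if a ≤ x ∧ x ≤ a+1 then 0 else σ x * F x)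
      = msum σ F - ∑ x ∈ inn σ a, σ x * F x := by
    have e : ∀ x ∈ σ.support ∪ {a, a+1}, (if a ≤ x ∧ x ≤ a+1 then 0 else σ x * F x)
        = σ x * F x - (if a ≤ x ∧ x ≤ a+1 then σ x * F x else 0) := by
      intro x _; split_ifs <;> ring
    rw [Finset.sum_congr rfl e, Finset.sum_sub_distrib, ← msum_eq_superset σ hσsub F]
    congr 1
    rw [← Finset.sum_filter]
    refine (Finset.sum_subset ?_ ?_).symm
    · intro x hx
      rw [inn, Finset.mem_filter] at hx
      rw [Finset.mem_filter]
      exact ⟨hσsub hx.1, hx.2⟩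
    · intro x hx hnx
      rw [Finset.mem_filter] at hx
      rw [inn, Finset.mem_filter] at hnx
      have : x ∉ σ.support := fun hs => hnx ⟨hs, hx.2⟩
      rw [Finsupp.notMem_support_iff.mp this, zero_mul]
  rw [h1, h2, h3]

lemma za_add_zb (σ : ℝ →₀ ℝ) (a : ℝ) : za σ a + zb σ a = ∑ x ∈ inn σ a, σ x := by
  rw [za, zb, ← Finset.sum_add_distrib]
  exact Finset.sum_congr rfl fun x _ => by ring

lemma za_zb_moment (σ : ℝ →₀ ℝ) (a : ℝ) :
    a * za σ a + (a+1) * zb σ a = ∑ x ∈ inn σ a, σ x * x := by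
  rw [za, zb, Finset.mul_sum, Finset.mul_sum, ← Finset.sum_add_distrib]
  exact Finset.sum_congr rfl fun x _ => by ring

lemma extreme_moment0 (σ : ℝ →₀ ℝ) (a : ℝ) : moment 0 (extreme σ a) = moment 0 σ := by
  rw [moment_eq_msum, moment_eq_msum, msum_extreme]
  simp only [pow_zero, mul_one]
  linarith [za_add_zb σ a]

lemma extreme_moment2 (σ : ℝ →₀ ℝ) (a : ℝ) : moment 2 (extreme σ a)
    = moment 2 σ + ∑ x ∈ inn σ a, σ x * ((x - a) * (a+1-x)) := by
  rw [moment_eq_msum, moment_eq_msum, msum_extreme]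
  have key : za σ a * a^2 + zb σ a * (a+1)^2 - ∑ x ∈ inn σ a, σ x * x^2
      = ∑ x ∈ inn σ a, σ x * ((x-a)*(a+1-x)) := by
    rw [za, zb, Finset.sum_mul, Finset.sum_mul, ← Finset.sum_add_distrib, ← Finset.sum_sub_distrib]
    exact Finset.sum_congr rfl fun x _ => by ring
  linarith [key]

lemma spread_eq_over (μ : ℝ →₀ ℝ) {U : Finset ℝ} (h : μ.support ⊆ U) :
    spread μ = 1/2 * ∑ x ∈ U, ∑ y ∈ U, μ x * μ y * |x - y| := by
  rw [spread]
  congr 1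
  have inner : ∀ x, ∑ y ∈ μ.support, μ x * μ y * |x - y| = ∑ y ∈ U, μ x * μ y * |x - y| :=
    fun x => Finset.sum_subset h (fun y _ hy => by
      rw [Finsupp.notMem_support_iff.mp hy]; ring)
  rw [Finset.sum_congr rfl (fun x _ => inner x)]
  exact Finset.sum_subset h (fun x _ hx => Finset.sum_eq_zero fun y _ => by
    rw [Finsupp.notMem_support_iff.mp hx]; ring)

noncomputable def Qd (U : Finset ℝ) (f g : ℝ → ℝ) : ℝ :=
  ∑ x ∈ U, ∑ y ∈ U, f x * g y * |x - y|

lemma Qd_symm (U : Finset ℝ) (f g : ℝ → ℝ) : Qd U f g = Qd U g f := by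
  rw [Qd, Qd, Finset.sum_comm]
  refine Finset.sum_congr rfl fun x _ => Finset.sum_congr rfl fun y _ => ?_
  rw [abs_sub_comm]; ring

lemma Qd_add_left (U : Finset ℝ) (f g h : ℝ → ℝ) :
    Qd U (fun x => f x + g x) h = Qd U f h + Qd U g h := by
  rw [Qd, Qd, Qd, ← Finset.sum_add_distrib]
  refine Finset.sum_congr rfl fun x _ => ?_
  rw [← Finset.sum_add_distrib]
  exact Finset.sum_congr rfl fun y _ => by ring

lemma Qd_add_right (U : Finset ℝ) (f g h : ℝ → ℝ) :
    Qd U f (fun x => g x + h x) = Qd U f g + Qd U f h := by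
  rw [Qd_symm, Qd_add_left, Qd_symm U g f, Qd_symm U h f]

lemma Qd_single_single (U : Finset ℝ) (a' b' c d : ℝ) (ha : a' ∈ U) (hb : b' ∈ U) :
    Qd U (fun x => if a' = x then c else 0) (fun y => if b' = y then d else 0)
      = c * d * |a' - b'| := by
  rw [Qd]
  have inner : ∀ x ∈ U, ∑ y ∈ U, (if a' = x then c else 0) * (if b' = y then d else 0) * |x - y|
      = (if a' = x then c else 0) * d * |x - b'| := by
    intro x _
    have e : ∀ y, (if a' = x then c else 0) * (if b' = y then d else 0) * |x - y|
        = (if b' = y then (if a' = x then c else 0) * d * |x - y| else 0) := by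
      intro y; split_ifs <;> ring
    rw [Finset.sum_congr rfl (fun y _ => e y), Finset.sum_ite_eq, if_pos hb]
  rw [Finset.sum_congr rfl inner]
  have e2 : ∀ x, (if a' = x then c else 0) * d * |x - b'|
      = (if a' = x then c * d * |x - b'| else 0) := by
    intro x; split_ifs <;> ring
  rw [Finset.sum_congr rfl (fun x _ => e2 x), Finset.sum_ite_eq, if_pos ha]

lemma sum_I_eq (σ : ℝ →₀ ℝ) (a : ℝ) {U : Finset ℝ} (hsub : σ.support ⊆ U) (G : ℝ → ℝ) :
    ∑ x ∈ U, (if a ≤ x ∧ x ≤ a+1 then σ x else 0) * G x = ∑ x ∈ inn σ a, σ x * G x := by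
  have e : ∀ x, (if a ≤ x ∧ x ≤ a+1 then σ x else 0) * G x
      = (if a ≤ x ∧ x ≤ a+1 then σ x * G x else 0) := by intro x; split_ifs <;> ring
  rw [Finset.sum_congr rfl (fun x _ => e x), ← Finset.sum_filter]
  refine (Finset.sum_subset ?_ ?_).symm
  · intro x hx
    rw [inn, Finset.mem_filter] at hx
    rw [Finset.mem_filter]
    exact ⟨hsub hx.1, hx.2⟩
  · intro x hx hnx
    rw [Finset.mem_filter] at hx
    rw [inn, Finset.mem_filter] at hnx
    have hz : x ∉ σ.support := fun hs => hnx ⟨hs, hx.2⟩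
    rw [Finsupp.notMem_support_iff.mp hz, zero_mul]

lemma cross_point (σ : ℝ →₀ ℝ) (a x : ℝ) (hx : ¬(a ≤ x ∧ x ≤ a+1)) :
    za σ a * |x - a| + zb σ a * |x - (a+1)| = ∑ y ∈ inn σ a, σ y * |x - y| := by
  have hcase : x < a ∨ a+1 < x := by
    by_cases h : a ≤ x
    · push_neg at hx
      exact Or.inr (lt_of_not_ge (fun hc => (hx h).not_ge hc))
    · exact Or.inl (lt_of_not_ge h)
  rcases hcase with h | h
  · have e : ∀ y ∈ inn σ a, σ y * |x - y| = σ y * (y - x) := by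
      intro y hy
      rw [inn, Finset.mem_filter] at hy
      rw [abs_of_nonpos (by linarith [hy.2.1] : x - y ≤ 0)]; ring
    rw [Finset.sum_congr rfl e, abs_of_nonpos (by linarith : x - a ≤ 0),
      abs_of_nonpos (by linarith : x - (a+1) ≤ 0)]
    have e2 : ∑ y ∈ inn σ a, σ y * (y - x)
        = (∑ y ∈ inn σ a, σ y * y) - x * ∑ y ∈ inn σ a, σ y := by
      rw [Finset.mul_sum, ← Finset.sum_sub_distrib]
      exact Finset.sum_congr rfl fun y _ => by ring
    rw [e2, ← za_zb_moment σ a, ← za_add_zb σ a]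
    ring
  · have e : ∀ y ∈ inn σ a, σ y * |x - y| = σ y * (x - y) := by
      intro y hy
      rw [inn, Finset.mem_filter] at hy
      rw [abs_of_nonneg (by linarith [hy.2.2] : (0:ℝ) ≤ x - y)]
    rw [Finset.sum_congr rfl e, abs_of_nonneg (by linarith : (0:ℝ) ≤ x - a),
      abs_of_nonneg (by linarith : (0:ℝ) ≤ x - (a+1))]
    have e2 : ∑ y ∈ inn σ a, σ y * (x - y)
        = x * (∑ y ∈ inn σ a, σ y) - ∑ y ∈ inn σ a, σ y * y := by
      rw [Finset.mul_sum, ← Finset.sum_sub_distrib]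
      exact Finset.sum_congr rfl fun y _ => by ring
    rw [e2, ← za_zb_moment σ a, ← za_add_zb σ a]
    ring

lemma spread_extreme (σ : ℝ →₀ ℝ) (a : ℝ) :
    spread (extreme σ a) = spread σ + (za σ a * zb σ a
      - 1/2 * ∑ x ∈ inn σ a, ∑ y ∈ inn σ a, σ x * σ y * |x - y|) := by
  set S0 : ℝ := ∑ x ∈ inn σ a, ∑ y ∈ inn σ a, σ x * σ y * |x - y| with hS0
  set U : Finset ℝ := σ.support ∪ {a, a+1} with hU
  have hUa : a ∈ U := Finset.mem_union_right _ (by simp)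
  have hUb : a+1 ∈ U := Finset.mem_union_right _ (by simp)
  have hσsub : σ.support ⊆ U := Finset.subset_union_left
  set Ofun : ℝ → ℝ := fun x => if a ≤ x ∧ x ≤ a+1 then 0 else σ x with hOdef
  set Ifun : ℝ → ℝ := fun x => if a ≤ x ∧ x ≤ a+1 then σ x else 0 with hIdef
  set Afun : ℝ → ℝ := fun x => if a = x then za σ a else 0 with hAdef
  set Bfun : ℝ → ℝ := fun x => if a+1 = x then zb σ a else 0 with hBdef
  -- spreads over U
  have hsp1 : spread (extreme σ a) = 1/2 * Qd U (⇑(extreme σ a)) (⇑(extreme σ a)) := by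
    rw [spread_eq_over (extreme σ a) (show (extreme σ a).support ⊆ U from extreme_support σ a), Qd]
  have hsp2 : spread σ = 1/2 * Qd U (⇑σ) (⇑σ) := by
    rw [spread_eq_over σ hσsub, Qd]
  -- pointwise decompositions
  have hext : ⇑(extreme σ a) = fun x => Ofun x + (Afun x + Bfun x) := by
    funext x
    rw [extreme_apply σ a x]
  have hsig : ⇑σ = fun x => Ofun x + Ifun x := by
    funext x
    show σ x = (if a ≤ x ∧ x ≤ a+1 then 0 else σ x) + (if a ≤ x ∧ x ≤ a+1 then σ x else 0)
    split_ifs <;> ring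
  -- Q-computations
  have hQOP : Qd U Ofun (fun y => Afun y + Bfun y) = Qd U Ofun Ifun := by
    rw [Qd_add_right, Qd, Qd, Qd, ← Finset.sum_add_distrib]
    refine Finset.sum_congr rfl fun x hx => ?_
    have hIside : ∑ y ∈ U, Ofun x * Ifun y * |x - y|
        = Ofun x * ∑ y ∈ inn σ a, σ y * |x - y| := by
      calc ∑ y ∈ U, Ofun x * Ifun y * |x - y|
          = ∑ y ∈ U, (if a ≤ y ∧ y ≤ a+1 then σ y else 0) * (Ofun x * |x - y|) := by
            refine Finset.sum_congr rfl fun y _ => ?_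
            show Ofun x * (if a ≤ y ∧ y ≤ a+1 then σ y else 0) * |x - y| = _
            ring
        _ = ∑ y ∈ inn σ a, σ y * (Ofun x * |x - y|) :=
            sum_I_eq σ a hσsub (fun y => Ofun x * |x - y|)
        _ = Ofun x * ∑ y ∈ inn σ a, σ y * |x - y| := by
            rw [Finset.mul_sum]
            exact Finset.sum_congr rfl fun y _ => by ring
    have hAside : ∑ y ∈ U, Ofun x * Afun y * |x - y| = Ofun x * (za σ a * |x - a|) := by
      have e : ∀ y, Ofun x * Afun y * |x - y|
          = (if a = y then Ofun x * (za σ a * |x - y|) else 0) := by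
        intro y; simp only [hAdef]; split_ifs <;> ring
      rw [Finset.sum_congr rfl (fun y _ => e y), Finset.sum_ite_eq, if_pos hUa]
    have hBside : ∑ y ∈ U, Ofun x * Bfun y * |x - y| = Ofun x * (zb σ a * |x - (a+1)|) := by
      have e : ∀ y, Ofun x * Bfun y * |x - y|
          = (if a+1 = y then Ofun x * (zb σ a * |x - y|) else 0) := by
        intro y; simp only [hBdef]; split_ifs <;> ring
      rw [Finset.sum_congr rfl (fun y _ => e y), Finset.sum_ite_eq, if_pos hUb]
    rw [hIside, hAside, hBside]
    by_cases hin : a ≤ x ∧ x ≤ a+1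
    · have : Ofun x = 0 := by simp only [hOdef]; rw [if_pos hin]
      rw [this]; ring
    · rw [← cross_point σ a x hin]; ring
  have hQII : Qd U Ifun Ifun = ∑ x ∈ inn σ a, ∑ y ∈ inn σ a, σ x * σ y * |x - y| := by
    rw [Qd]
    have outer : ∀ x ∈ U, ∑ y ∈ U, Ifun x * Ifun y * |x - y|
        = Ifun x * ∑ y ∈ inn σ a, σ y * |x - y| := by
      intro x _
      calc ∑ y ∈ U, Ifun x * Ifun y * |x - y|
          = ∑ y ∈ U, (if a ≤ y ∧ y ≤ a+1 then σ y else 0) * (Ifun x * |x - y|) := by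
            refine Finset.sum_congr rfl fun y _ => ?_
            show Ifun x * (if a ≤ y ∧ y ≤ a+1 then σ y else 0) * |x - y| = _
            ring
        _ = ∑ y ∈ inn σ a, σ y * (Ifun x * |x - y|) :=
            sum_I_eq σ a hσsub (fun y => Ifun x * |x - y|)
        _ = Ifun x * ∑ y ∈ inn σ a, σ y * |x - y| := by
            rw [Finset.mul_sum]
            exact Finset.sum_congr rfl fun y _ => by ring
    rw [Finset.sum_congr rfl outer]
    calc ∑ x ∈ U, Ifun x * ∑ y ∈ inn σ a, σ y * |x - y|
        = ∑ x ∈ U, (if a ≤ x ∧ x ≤ a+1 then σ x else 0) * ∑ y ∈ inn σ a, σ y * |x - y| :=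
          rfl
      _ = ∑ x ∈ inn σ a, σ x * ∑ y ∈ inn σ a, σ y * |x - y| :=
          sum_I_eq σ a hσsub (fun x => ∑ y ∈ inn σ a, σ y * |x - y|)
      _ = ∑ x ∈ inn σ a, ∑ y ∈ inn σ a, σ x * σ y * |x - y| := by
          refine Finset.sum_congr rfl fun x _ => ?_
          rw [Finset.mul_sum]
          exact Finset.sum_congr rfl fun y _ => by ring
  have hQPP : Qd U (fun y => Afun y + Bfun y) (fun y => Afun y + Bfun y)
      = 2 * (za σ a * zb σ a) := by
    rw [Qd_add_left, Qd_add_right, Qd_add_right]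
    have h1 : Qd U Afun Afun = za σ a * za σ a * |a - a| :=
      Qd_single_single U a a _ _ hUa hUa
    have h2 : Qd U Afun Bfun = za σ a * zb σ a * |a - (a+1)| :=
      Qd_single_single U a (a+1) _ _ hUa hUb
    have h3 : Qd U Bfun Afun = zb σ a * za σ a * |(a+1) - a| :=
      Qd_single_single U (a+1) a _ _ hUb hUa
    have h4 : Qd U Bfun Bfun = zb σ a * zb σ a * |(a+1) - (a+1)| :=
      Qd_single_single U (a+1) (a+1) _ _ hUb hUb
    rw [h1, h2, h3, h4]
    simp only [sub_self, abs_zero]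
    rw [show |a - (a+1)| = 1 by rw [abs_of_nonpos (by linarith : a - (a+1) ≤ 0)]; ring,
      show |(a+1) - a| = 1 by rw [abs_of_nonneg (by linarith : (0:ℝ) ≤ (a+1) - a)]; ring]
    ring
  -- expansions
  have eL : Qd U (fun x => Ofun x + (Afun x + Bfun x)) (fun x => Ofun x + (Afun x + Bfun x))
      = Qd U Ofun Ofun + Qd U Ofun Ifun + (Qd U Ofun Ifun + 2 * (za σ a * zb σ a)) := by
    rw [Qd_add_left U Ofun (fun x => Afun x + Bfun x) (fun x => Ofun x + (Afun x + Bfun x)),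
      Qd_add_right U Ofun Ofun (fun x => Afun x + Bfun x),
      Qd_add_right U (fun x => Afun x + Bfun x) Ofun (fun x => Afun x + Bfun x),
      hQOP, hQPP, Qd_symm U (fun x => Afun x + Bfun x) Ofun, hQOP]
  have hQII' : Qd U Ifun Ifun = S0 := hQII.trans hS0.symm
  have eR : Qd U (fun x => Ofun x + Ifun x) (fun x => Ofun x + Ifun x)
      = Qd U Ofun Ofun + Qd U Ofun Ifun + (Qd U Ofun Ifun + S0) := by
    rw [Qd_add_left U Ofun Ifun (fun x => Ofun x + Ifun x),
      Qd_add_right U Ofun Ofun Ifun, Qd_add_right U Ifun Ofun Ifun,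
      hQII', Qd_symm U Ifun Ofun]
  rw [hsp1, hsp2, hext, hsig, eL, eR]
  ring


/-! ### finset versions of the core inequalities -/

lemma core_E_finset (s : Finset ℝ) (α : ℝ → ℝ) (h0 : ∀ x ∈ s, 0 ≤ x) (h1 : ∀ x ∈ s, x ≤ 1)
    (hα : ∀ x ∈ s, 0 ≤ α x) :
    3 * (∑ x ∈ s, α x * (x * (1 - x)))^2
      ≤ (∑ x ∈ s, α x * (1 - x)) * (∑ x ∈ s, α x * x)
        - 1/2 * ∑ x ∈ s, ∑ y ∈ s, α x * (α y * |x - y|) := by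
  obtain ⟨n, Y, hmono, hmem, hbr⟩ := finset_enum s
  rw [hbr (fun x => α x * (x * (1 - x))), hbr (fun x => α x * (1 - x)), hbr (fun x => α x * x),
    hbr (fun x => ∑ y ∈ s, α x * (α y * |x - y|))]
  have hinner : ∀ i ∈ Finset.range n, (fun x => ∑ y ∈ s, α x * (α y * |x - y|)) (Y i)
      = ∑ j ∈ Finset.range n, α (Y i) * (α (Y j) * |Y i - Y j|) := by
    intro i _
    exact hbr (fun y => α (Y i) * (α y * |Y i - y|))
  rw [Finset.sum_congr rfl hinner]
  exact core_E_nat n Y (fun i => α (Y i)) hmono (fun i hi => h0 _ (hmem i hi))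
    (fun i hi => h1 _ (hmem i hi)) (fun i hi => hα _ (hmem i hi))

lemma core_F_finset (s : Finset ℝ) (α : ℝ → ℝ) (hα : ∀ x ∈ s, 0 ≤ α x)
    (hsum : ∑ x ∈ s, α x = 1) :
    (1/2 * ∑ x ∈ s, ∑ y ∈ s, α x * (α y * |x - y|))^2 ≤ (∑ x ∈ s, α x * x^2)/3 := by
  obtain ⟨n, Y, hmono, hmem, hbr⟩ := finset_enum s
  rw [hbr (fun x => ∑ y ∈ s, α x * (α y * |x - y|)), hbr (fun x => α x * x^2)]
  have hinner : ∀ i ∈ Finset.range n, (fun x => ∑ y ∈ s, α x * (α y * |x - y|)) (Y i)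
      = ∑ j ∈ Finset.range n, α (Y i) * (α (Y j) * |Y i - Y j|) := by
    intro i _
    exact hbr (fun y => α (Y i) * (α y * |Y i - y|))
  rw [Finset.sum_congr rfl hinner]
  have hs2 : ∑ i ∈ Finset.range n, α (Y i) = 1 := by
    rw [← hbr (fun x => α x)]
    exact hsum
  exact core_F_nat n Y (fun i => α (Y i)) hmono (fun i hi => hα _ (hmem i hi)) hs2

lemma spread_sq_le (σ : ℝ →₀ ℝ) (hσ : ∀ x, 0 ≤ σ x) (hm : moment 0 σ = 1) :
    (spread σ)^2 ≤ moment 2 σ / 3 := by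
  have hsum : ∑ x ∈ σ.support, σ x = 1 := by
    rw [moment] at hm
    simpa using hm
  have h := core_F_finset σ.support (⇑σ) (fun x _ => hσ x) hsum
  have e : spread σ = 1/2 * ∑ x ∈ σ.support, ∑ y ∈ σ.support, σ x * (σ y * |x - y|) := by
    rw [spread]
    congr 1
    exact Finset.sum_congr rfl fun x _ => Finset.sum_congr rfl fun y _ => by ring
  rw [e, moment]
  exact h

lemma extreme_spread_bound (σ : ℝ →₀ ℝ) (a : ℝ) (hσ : ∀ x, 0 ≤ σ x) :
    spread σ + 3 * (∑ x ∈ inn σ a, σ x * ((x - a) * (a+1-x)))^2 ≤ spread (extreme σ a) := by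
  rw [spread_extreme σ a]
  have hinj : ∀ x ∈ inn σ a, ∀ y ∈ inn σ a, x - a = y - a → x = y := by
    intro x _ y _ h
    linarith
  have him : ∀ F : ℝ → ℝ, ∑ y ∈ (inn σ a).image (fun x => x - a), F y
      = ∑ x ∈ inn σ a, F (x - a) := fun F => Finset.sum_image hinj
  have hmem : ∀ y ∈ (inn σ a).image (fun x => x - a), 0 ≤ y ∧ y ≤ 1 := by
    intro y hy
    rw [Finset.mem_image] at hy
    obtain ⟨x, hx, rfl⟩ := hy
    rw [inn, Finset.mem_filter] at hx
    constructor <;> linarith [hx.2.1, hx.2.2]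
  have key := core_E_finset ((inn σ a).image (fun x => x - a)) (fun y => σ (y + a))
    (fun y hy => (hmem y hy).1) (fun y hy => (hmem y hy).2) (fun y _ => hσ _)
  rw [him (fun y => σ (y + a) * (y * (1 - y))), him (fun y => σ (y + a) * (1 - y)),
    him (fun y => σ (y + a) * y),
    him (fun y => ∑ z ∈ (inn σ a).image (fun x => x - a), σ (y + a) * (σ (z + a) * |y - z|))]
    at key
  have e1 : ∑ x ∈ inn σ a, σ (x - a + a) * ((x - a) * (1 - (x - a)))
      = ∑ x ∈ inn σ a, σ x * ((x - a) * (a+1-x)) := by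
    refine Finset.sum_congr rfl fun x _ => ?_
    rw [show x - a + a = x by ring]
    ring
  have e2 : ∑ x ∈ inn σ a, σ (x - a + a) * (1 - (x - a)) = za σ a := by
    rw [za]
    refine Finset.sum_congr rfl fun x _ => ?_
    rw [show x - a + a = x by ring]
    ring
  have e3 : ∑ x ∈ inn σ a, σ (x - a + a) * (x - a) = zb σ a := by
    rw [zb]
    exact Finset.sum_congr rfl fun x _ => by rw [show x - a + a = x by ring]
  have e4 : ∑ x ∈ inn σ a, ∑ z ∈ (inn σ a).image (fun x => x - a),
        σ (x - a + a) * (σ (z + a) * |x - a - z|)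
      = ∑ x ∈ inn σ a, ∑ y ∈ inn σ a, σ x * σ y * |x - y| := by
    refine Finset.sum_congr rfl fun x _ => ?_
    rw [him (fun z => σ (x - a + a) * (σ (z + a) * |x - a - z|))]
    refine Finset.sum_congr rfl fun y _ => ?_
    rw [show x - a + a = x by ring, show y - a + a = y by ring,
      show x - a - (y - a) = x - y by ring]
    ring
  rw [e1, e2, e3, e4] at key
  linarith

/-! ### chords of convex functions -/

noncomputable def chordFn (f : ℝ → ℝ) (a : ℝ) : ℝ → ℝ :=
  fun x => max (f x) (f a * (a+1-x) + f (a+1) * (x-a))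

lemma affine_convexOn (c e : ℝ) : ConvexOn ℝ Set.univ (fun x : ℝ => c*x + e) := by
  refine ⟨convex_univ, fun x _ y _ p q hp hq hpq => ?_⟩
  simp only [smul_eq_mul]
  have h : p * (c * x + e) + q * (c * y + e) = c * (p * x + q * y) + (p + q) * e := by ring
  rw [h, hpq]
  norm_num

lemma chordFn_convexOn {f : ℝ → ℝ} (hf : ConvexOn ℝ Set.univ f) (a : ℝ) :
    ConvexOn ℝ Set.univ (chordFn f a) := by
  have haff : ConvexOn ℝ Set.univ (fun x => f a * (a+1-x) + f (a+1) * (x-a)) := by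
    have e : (fun x : ℝ => f a * (a+1-x) + f (a+1) * (x-a))
        = fun x : ℝ => (f (a+1) - f a)*x + (f a * (a+1) - f (a+1) * a) := by
      funext x; ring
    rw [e]
    exact affine_convexOn _ _
  exact hf.sup haff

lemma le_chordFn (f : ℝ → ℝ) (a x : ℝ) : f x ≤ chordFn f a x := le_max_left _ _

lemma chordFn_eq_inside {f : ℝ → ℝ} (hf : ConvexOn ℝ Set.univ f) {a x : ℝ}
    (h1 : a ≤ x) (h2 : x ≤ a+1) :
    chordFn f a x = f a * (a+1-x) + f (a+1) * (x-a) := by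
  apply max_eq_right
  have key := hf.2 (Set.mem_univ a) (Set.mem_univ (a+1))
    (by linarith : (0:ℝ) ≤ a+1-x) (by linarith : (0:ℝ) ≤ x-a) (by ring : (a+1-x) + (x-a) = 1)
  simp only [smul_eq_mul] at key
  rw [show (a+1-x) * a + (x-a) * (a+1) = x by ring] at key
  linarith [key]

lemma chordFn_eq_outside {f : ℝ → ℝ} (hf : ConvexOn ℝ Set.univ f) {a x : ℝ}
    (h : x < a ∨ a+1 < x) : chordFn f a x = f x := by
  apply max_eq_left
  rcases h with h | h
  · have hd : 0 < a+1-x := by linarith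
    have key := hf.2 (Set.mem_univ x) (Set.mem_univ (a+1))
      (show (0:ℝ) ≤ 1/(a+1-x) by positivity)
      (show (0:ℝ) ≤ (a-x)/(a+1-x) by
        apply div_nonneg <;> linarith)
      (show 1/(a+1-x) + (a-x)/(a+1-x) = 1 by field_simp; ring)
    simp only [smul_eq_mul] at key
    rw [show 1/(a+1-x) * x + (a-x)/(a+1-x) * (a+1) = a by field_simp; ring] at key
    have key2 := mul_le_mul_of_nonneg_right key hd.le
    rw [show (1/(a+1-x) * f x + (a-x)/(a+1-x) * f (a+1)) * (a+1-x)
        = f x * ((1/(a+1-x)) * (a+1-x)) + f (a+1) * ((a-x)/(a+1-x) * (a+1-x)) by ring,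
      show 1/(a+1-x) * (a+1-x) = 1 by field_simp,
      show (a-x)/(a+1-x) * (a+1-x) = a-x by field_simp] at key2
    nlinarith [key2]
  · have hd : 0 < x - a := by linarith
    have key := hf.2 (Set.mem_univ a) (Set.mem_univ x)
      (show (0:ℝ) ≤ (x-(a+1))/(x-a) by
        apply div_nonneg <;> linarith)
      (show (0:ℝ) ≤ 1/(x-a) by positivity)
      (show (x-(a+1))/(x-a) + 1/(x-a) = 1 by field_simp; ring)
    simp only [smul_eq_mul] at key
    rw [show (x-(a+1))/(x-a) * a + 1/(x-a) * x = a+1 by field_simp; ring] at key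
    have key2 := mul_le_mul_of_nonneg_right key hd.le
    rw [show ((x-(a+1))/(x-a) * f a + 1/(x-a) * f x) * (x-a)
        = f a * ((x-(a+1))/(x-a) * (x-a)) + f x * ((1/(x-a)) * (x-a)) by ring,
      show (x-(a+1))/(x-a) * (x-a) = x-(a+1) by field_simp,
      show 1/(x-a) * (x-a) = 1 by field_simp] at key2
    nlinarith [key2]

lemma msum_chord_eq {f : ℝ → ℝ} (hf : ConvexOn ℝ Set.univ f) (σ : ℝ →₀ ℝ) (a : ℝ) :
    msum σ (chordFn f a) = msum (extreme σ a) f := by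
  rw [msum_extreme]
  have hsplit : ∀ (G : ℝ → ℝ), msum σ G
      = ∑ x ∈ inn σ a, σ x * G x
        + ∑ x ∈ σ.support.filter (fun x => ¬(a ≤ x ∧ x ≤ a+1)), σ x * G x := by
    intro G
    rw [msum, inn]
    exact (Finset.sum_filter_add_sum_filter_not _ _ _).symm
  rw [hsplit (chordFn f a), hsplit f]
  have hout : ∑ x ∈ σ.support.filter (fun x => ¬(a ≤ x ∧ x ≤ a+1)), σ x * chordFn f a x
      = ∑ x ∈ σ.support.filter (fun x => ¬(a ≤ x ∧ x ≤ a+1)), σ x * f x := by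
    refine Finset.sum_congr rfl fun x hx => ?_
    rw [Finset.mem_filter] at hx
    have hcase : x < a ∨ a+1 < x := by
      by_cases hax : a ≤ x
      · right
        by_contra hc
        exact hx.2 ⟨hax, by linarith⟩
      · exact Or.inl (lt_of_not_ge hax)
    rw [chordFn_eq_outside hf hcase]
  have hin : ∑ x ∈ inn σ a, σ x * chordFn f a x
      = za σ a * f a + zb σ a * f (a+1) := by
    have e : ∀ x ∈ inn σ a, σ x * chordFn f a x
        = σ x * (a+1-x) * f a + σ x * (x-a) * f (a+1) := by
      intro x hx
      rw [inn, Finset.mem_filter] at hx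
      rw [chordFn_eq_inside hf hx.2.1 hx.2.2]
      ring
    rw [Finset.sum_congr rfl e, Finset.sum_add_distrib, za, zb, Finset.sum_mul, Finset.sum_mul]
  rw [hout, hin]
  ring

lemma msum_move_chord {f : ℝ → ℝ} (hf : ConvexOn ℝ Set.univ f) (w : Move) :
    msum w.δ (chordFn f w.a) = 0 := by
  have e : ∀ x ∈ w.δ.support, w.δ x * chordFn f w.a x
      = (f (w.a+1) - f w.a) * (w.δ x * x) + (f w.a * (w.a+1) - f (w.a+1) * w.a) * w.δ x := by
    intro x hx
    obtain ⟨h1, h2⟩ := w.supp_subset x (Finsupp.mem_support_iff.mp hx)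
    rw [chordFn_eq_inside hf h1 h2]
    ring
  rw [msum, Finset.sum_congr rfl e, Finset.sum_add_distrib, ← Finset.mul_sum, ← Finset.mul_sum]
  have h1 : ∑ x ∈ w.δ.support, w.δ x * x = 0 := by
    have := w.m1
    rw [moment] at this
    simpa using this
  have h0 : ∑ x ∈ w.δ.support, w.δ x = 0 := by
    have := w.m0
    rw [moment] at this
    simpa using this
  rw [h1, h0]
  ring

/-! ### remaining small lemmas -/

lemma spread_nonneg (σ : ℝ →₀ ℝ) (hσ : ∀ x, 0 ≤ σ x) : 0 ≤ spread σ := by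
  rw [spread]
  have : (0:ℝ) ≤ ∑ x ∈ σ.support, ∑ y ∈ σ.support, σ x * σ y * |x - y| :=
    Finset.sum_nonneg fun x _ => Finset.sum_nonneg fun y _ =>
      mul_nonneg (mul_nonneg (hσ x) (hσ y)) (abs_nonneg _)
  linarith

lemma moment2_nonneg (σ : ℝ →₀ ℝ) (hσ : ∀ x, 0 ≤ σ x) : 0 ≤ moment 2 σ := by
  rw [moment]
  exact Finset.sum_nonneg fun x _ => mul_nonneg (hσ x) (by positivity)

lemma delta_nonneg (σ : ℝ →₀ ℝ) (a : ℝ) (hσ : ∀ x, 0 ≤ σ x) :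
    0 ≤ ∑ x ∈ inn σ a, σ x * ((x - a) * (a+1-x)) :=
  Finset.sum_nonneg fun x hx => by
    rw [inn, Finset.mem_filter] at hx
    exact mul_nonneg (hσ x) (mul_nonneg (by linarith [hx.2.1]) (by linarith [hx.2.2]))

end MfPM

set_option maxHeartbeats 1600000 in
/-- **Lemma.** Any sequence of moves transforming `μ = {(0,1)}` into a
distribution `ν` with `ν{|x| ≥ d} ≥ p`, where `d > 0` and `0 < p < 1`, contains
at least `(3p)^(3/2) d³` moves. -/
theorem moves_from_point_mass (d p : ℝ) (hd : 0 < d) (hp0 : 0 < p) (hp1 : p < 1)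
    (ℓ : ℕ) (v : ℕ → Move) (μ : ℕ → ℝ →₀ ℝ) (hseq : IsMoveSeq ℓ v μ)
    (h0 : μ 0 = Finsupp.single 0 1)
    (hfin : p ≤ mass (μ ℓ) {t | d ≤ |t|}) :
    (3 * p) ^ ((3 : ℝ) / 2) * d ^ 3 ≤ (ℓ : ℝ) := by
  classical
  obtain ⟨hdist, hstep⟩ := hseq
  have hm0_base : moment 0 (μ 0) = 1 := by
    rw [h0, moment, Finsupp.support_single_ne_zero (0:ℝ) one_ne_zero]
    simp
  have hm2_base : moment 2 (μ 0) = 0 := by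
    rw [h0, moment, Finsupp.support_single_ne_zero (0:ℝ) one_ne_zero]
    simp
  have key : ∀ i, i ≤ ℓ → ∃ σ : ℝ →₀ ℝ, (∀ x, 0 ≤ σ x) ∧ moment 0 σ = 1 ∧
      (∀ f : ℝ → ℝ, ConvexOn ℝ Set.univ f → MfPM.msum (μ i) f ≤ MfPM.msum σ f) ∧
      (moment 2 σ)^2 ≤ (i : ℝ) * spread σ / 3 := by
    intro i
    induction i with
    | zero =>
        intro _
        refine ⟨μ 0, (hdist 0 (Nat.zero_le ℓ)).1, hm0_base, fun f _ => le_refl _, ?_⟩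
        rw [hm2_base]
        simp
    | succ k ih =>
        intro hk
        have hkℓ : k < ℓ := hk
        obtain ⟨σ, hσpos, hσ0, hσcx, hσnum⟩ := ih (le_of_lt hkℓ)
        refine ⟨MfPM.extreme σ ((v k).a), MfPM.extreme_nonneg σ ((v k).a) hσpos, ?_, ?_, ?_⟩
        · rw [MfPM.extreme_moment0, hσ0]
        · intro f hf
          have s1 : MfPM.msum (μ (k+1)) f ≤ MfPM.msum (μ (k+1)) (MfPM.chordFn f ((v k).a)) := by
            rw [MfPM.msum, MfPM.msum]
            exact Finset.sum_le_sum fun x _ => mul_le_mul_of_nonneg_left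
              (MfPM.le_chordFn f ((v k).a) x) ((hdist (k+1) hk).1 x)
          have s2 : MfPM.msum (μ (k+1)) (MfPM.chordFn f ((v k).a))
              = MfPM.msum (μ k) (MfPM.chordFn f ((v k).a)) := by
            rw [hstep k hkℓ, MfPM.msum_add, MfPM.msum_move_chord hf (v k), add_zero]
          have s3 := hσcx (MfPM.chordFn f ((v k).a)) (MfPM.chordFn_convexOn hf ((v k).a))
          have s4 : MfPM.msum σ (MfPM.chordFn f ((v k).a))
              = MfPM.msum (MfPM.extreme σ ((v k).a)) f :=
            MfPM.msum_chord_eq hf σ ((v k).a)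
          linarith [s1, s2, s3, s4]
        · set M := moment 2 σ with hM
          set Δ := ∑ x ∈ MfPM.inn σ ((v k).a), σ x * ((x - (v k).a) * ((v k).a+1-x)) with hΔ
          have hm2e : moment 2 (MfPM.extreme σ ((v k).a)) = M + Δ :=
            MfPM.extreme_moment2 σ ((v k).a)
          have hsp : spread σ + 3 * Δ^2 ≤ spread (MfPM.extreme σ ((v k).a)) :=
            MfPM.extreme_spread_bound σ ((v k).a) hσpos
          have hΔnn : 0 ≤ Δ := MfPM.delta_nonneg σ ((v k).a) hσpos
          have hMnn : 0 ≤ M := MfPM.moment2_nonneg σ hσpos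
          have hSnn : 0 ≤ spread σ := MfPM.spread_nonneg σ hσpos
          rw [hm2e]
          push_cast
          rcases Nat.eq_zero_or_pos k with hk0 | hkpos
          · subst hk0
            have hM2z : M^2 ≤ 0 := by
              have h := hσnum
              push_cast at h
              linarith
            have hM0' : M = 0 := by nlinarith [sq_nonneg M]
            rw [hM0']
            nlinarith [hsp, hSnn]
          · have hk1 : (1:ℝ) ≤ (k:ℝ) := by exact_mod_cast hkpos
            have hnum := hσnum
            have hA := mul_le_mul_of_nonneg_left hnum
              (by linarith : (0:ℝ) ≤ (k:ℝ) + 1)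
            have hB := mul_le_mul_of_nonneg_left hsp
              (by positivity : (0:ℝ) ≤ (k:ℝ) * ((k:ℝ)+1) / 3)
            have step : (k:ℝ) * ((M + Δ)^2)
                ≤ (k:ℝ) * (((k:ℝ)+1) * spread (MfPM.extreme σ ((v k).a)) / 3) := by
              nlinarith [sq_nonneg (M - (k:ℝ)*Δ), hA, hB]
            have hkpos' : (0:ℝ) < (k:ℝ) := by linarith
            have := (mul_le_mul_iff_right₀ hkpos').mp step
            linarith
  obtain ⟨σ, hσpos, hσ0, hσcx, hσnum⟩ := key ℓ (le_refl ℓ)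
  have hmass : p * d^2 ≤ moment 2 (μ ℓ) := by
    have h1 : mass (μ ℓ) {t | d ≤ |t|} * d^2 ≤ moment 2 (μ ℓ) := by
      rw [mass, moment, Finset.sum_mul]
      refine Finset.sum_le_sum fun x _ => ?_
      rw [Set.indicator_apply]
      by_cases hx : x ∈ {t : ℝ | d ≤ |t|}
      · rw [if_pos hx]
        have hdx : d ≤ |x| := hx
        have hd2 : d^2 ≤ x^2 := by
          rw [← sq_abs x]
          exact pow_le_pow_left₀ hd.le hdx 2
        exact mul_le_mul_of_nonneg_left hd2 ((hdist ℓ (le_refl ℓ)).1 x)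
      · rw [if_neg hx, zero_mul]
        exact mul_nonneg ((hdist ℓ (le_refl ℓ)).1 x) (sq_nonneg x)
    have h2 : p * d^2 ≤ mass (μ ℓ) {t | d ≤ |t|} * d^2 :=
      mul_le_mul_of_nonneg_right hfin (sq_nonneg d)
    linarith
  have hm2cmp : moment 2 (μ ℓ) ≤ moment 2 σ := by
    have := hσcx (fun x => x^2) (Even.convexOn_pow even_two)
    rw [MfPM.moment_eq_msum, MfPM.moment_eq_msum]
    exact this
  have hSle : (spread σ)^2 ≤ moment 2 σ / 3 := MfPM.spread_sq_le σ hσpos hσ0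
  set M := moment 2 σ with hM
  have hMpos : 0 < M :=
    lt_of_lt_of_le (by positivity : (0:ℝ) < p * d^2) (le_trans hmass hm2cmp)
  have hSnn : 0 ≤ spread σ := MfPM.spread_nonneg σ hσpos
  have h3 : 27 * M^3 ≤ (ℓ:ℝ)^2 := by
    have h1 : (M^2)^2 ≤ ((ℓ:ℝ) * spread σ / 3)^2 := pow_le_pow_left₀ (sq_nonneg M) hσnum 2
    have h2 : (ℓ:ℝ)^2 * (spread σ)^2 ≤ (ℓ:ℝ)^2 * (M/3) :=
      mul_le_mul_of_nonneg_left hSle (sq_nonneg (ℓ:ℝ))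
    have h6 : 27*M^3*M ≤ (ℓ:ℝ)^2*M := by nlinarith [h1, h2]
    exact le_of_mul_le_mul_right (by linarith) hMpos
  have e1 : ((d:ℝ)^2) ^ ((3:ℝ)/2) = d ^ (3:ℕ) := by
    rw [← Real.rpow_natCast d 2, ← Real.rpow_mul hd.le, ← Real.rpow_natCast d 3]
    norm_num
  have h4 : ((3*p)*(d^2)) ^ ((3:ℝ)/2) = (3*p) ^ ((3:ℝ)/2) * d^3 := by
    rw [Real.mul_rpow (by positivity) (by positivity), e1]
  have c1 : ((3*p)*(d^2)) ^ ((3:ℝ)/2) ≤ (3*M) ^ ((3:ℝ)/2) := by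
    apply Real.rpow_le_rpow (by positivity)
    · linarith [hmass, hm2cmp]
    · norm_num
  have hKnn : (0:ℝ) ≤ 3*M := by linarith
  have c2 : (3*M) ^ ((3:ℝ)/2) ≤ (ℓ:ℝ) := by
    have e2 : ((3*M) ^ ((3:ℝ)/2))^2 = (3*M)^(3:ℕ) := by
      rw [← Real.rpow_natCast ((3*M) ^ ((3:ℝ)/2)) 2, ← Real.rpow_natCast (3*M) 3,
        ← Real.rpow_mul hKnn]
      norm_num
    have h5 : ((3*M) ^ ((3:ℝ)/2))^2 ≤ (ℓ:ℝ)^2 := by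
      rw [e2]
      nlinarith [h3]
    have hnnl : (0:ℝ) ≤ (ℓ:ℝ) := Nat.cast_nonneg ℓ
    have hnnK : 0 ≤ (3*M) ^ ((3:ℝ)/2) := Real.rpow_nonneg hKnn _
    calc (3*M) ^ ((3:ℝ)/2) = Real.sqrt (((3*M) ^ ((3:ℝ)/2))^2) := (Real.sqrt_sq hnnK).symm
      _ ≤ Real.sqrt ((ℓ:ℝ)^2) := Real.sqrt_le_sqrt h5
      _ = (ℓ:ℝ) := Real.sqrt_sq hnnl
  calc (3 * p) ^ ((3 : ℝ) / 2) * d ^ 3 = ((3*p)*(d^2)) ^ ((3:ℝ)/2) := h4.symm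
    _ ≤ (3*M) ^ ((3:ℝ)/2) := c1
    _ ≤ (ℓ:ℝ) := c2
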